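/- For all λ>0, c>0, t>0, the absolutely continuous part of the ℝ⁴ Markov random flight density has total mass 1 − e^{-λt}: ∫_{‖x‖<ct} (λt/(π²(ct)⁴))[2 + λt(1 − ‖x‖²/(ct)²)] exp(−(λ/(c²t))‖x‖²) dx = 1 − e^{-λt}, the integral over the open ball of radius ct in ℝ⁴. -/

import Mathlib

open Real MeasureTheory

private lemma polar4 (R : ℝ) (f : ℝ → ℝ) :
    (∫ x in Metric.ball (0 : EuclideanSpace ℝ (Fin 4)) R, f ‖x‖) =
      2 * π ^ 2 * ∫ y in Set.Ioo (0:ℝ) R, y ^ 3 * f y := by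
  have h1 : (∫ x in Metric.ball (0 : EuclideanSpace ℝ (Fin 4)) R, f ‖x‖) =
      ∫ x : EuclideanSpace ℝ (Fin 4), (Set.Iio R).indicator f ‖x‖ := by
    rw [← integral_indicator measurableSet_ball]
    congr 1
    ext x
    by_cases hx : x ∈ Metric.ball (0 : EuclideanSpace ℝ (Fin 4)) R
    · rw [Set.indicator_of_mem hx, Set.indicator_of_mem]
      simpa [Metric.mem_ball, dist_zero_right] using hx
    · rw [Set.indicator_of_notMem hx, Set.indicator_of_notMem]
      simpa [Metric.mem_ball, dist_zero_right] using hx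
  rw [h1, integral_fun_norm_addHaar volume ((Set.Iio R).indicator f)]
  have hdim : Module.finrank ℝ (EuclideanSpace ℝ (Fin 4)) = 4 := by
    simp [finrank_euclideanSpace]
  rw [hdim]
  have hvol : (volume (Metric.ball (0 : EuclideanSpace ℝ (Fin 4)) 1)).toReal = π ^ 2 / 2 := by
    rw [EuclideanSpace.volume_ball]
    simp only [Fintype.card_fin]
    have h4 : (Real.sqrt π) ^ 4 = π ^ 2 := by
      rw [show (4:ℕ) = 2 * 2 from rfl, pow_mul, Real.sq_sqrt pi_pos.le]
    have hg : Real.Gamma ((4:ℕ) / 2 + 1) = 2 := by norm_num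
    rw [h4, hg]
    rw [ENNReal.toReal_mul, ENNReal.toReal_pow, ENNReal.toReal_ofReal zero_le_one,
      ENNReal.toReal_ofReal (by positivity), one_pow, one_mul]
  rw [measureReal_def, hvol]
  have h2 : (∫ y in Set.Ioi (0:ℝ), y ^ (4 - 1) • (Set.Iio R).indicator f y) =
      ∫ y in Set.Ioo (0:ℝ) R, y ^ 3 * f y := by
    have key : ∀ y : ℝ, y ^ (4 - 1 : ℕ) • (Set.Iio R).indicator f y =
        (Set.Iio R).indicator (fun y => y ^ 3 * f y) y := by
      intro y
      by_cases hy : y ∈ Set.Iio R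
      · rw [Set.indicator_of_mem hy, Set.indicator_of_mem hy]; simp [smul_eq_mul]
      · rw [Set.indicator_of_notMem hy, Set.indicator_of_notMem hy]; simp
    simp_rw [key]
    rw [setIntegral_indicator measurableSet_Iio, Set.Ioi_inter_Iio]
  rw [h2]
  simp only [nsmul_eq_mul, smul_eq_mul]
  ring

private lemma oneD (lam c t : ℝ) (hlam : 0 < lam) (hc : 0 < c) (ht : 0 < t) :
    (∫ y in Set.Ioo (0:ℝ) (c*t), y ^ 3 *
        ((lam * t / (π ^ 2 * (c * t) ^ 4)) *
          (2 + lam * t * (1 - y ^ 2 / (c * t) ^ 2)) *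
            Real.exp (-(lam / (c ^ 2 * t)) * y ^ 2)))
      = (1 - Real.exp (-(lam * t))) / (2 * π ^ 2) := by
  set R := c * t with hRdef
  set a := lam / (c ^ 2 * t) with hadef
  set s := lam * t with hsdef
  have hR : 0 < R := by positivity
  have hs : 0 < s := by positivity
  have ha : 0 < a := by positivity
  have haR : a * R ^ 2 = s := by
    rw [hadef, hRdef, hsdef]; field_simp
  set K := s / (π ^ 2 * R ^ 4) with hKdef
  set H : ℝ → ℝ := fun r => K * ((r ^ 4 / 2 - R ^ 2 * r ^ 2 / 2 - R ^ 4 / (2 * s)) *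
    Real.exp (-a * r ^ 2)) with hHdef
  have hderiv : ∀ r ∈ Set.uIcc (0:ℝ) R, HasDerivAt H
      (r ^ 3 * (K * (2 + s * (1 - r ^ 2 / R ^ 2)) * Real.exp (-a * r ^ 2))) r := by
    intro r _
    have h1 : HasDerivAt (fun r : ℝ => -a * r ^ 2) (-a * (2 * r)) r := by
      simpa using (hasDerivAt_pow 2 r).const_mul (-a)
    have h2 : HasDerivAt (fun r : ℝ => Real.exp (-a * r ^ 2))
        (Real.exp (-a * r ^ 2) * (-a * (2 * r))) r := h1.exp
    have h3 : HasDerivAt (fun r : ℝ => r ^ 4 / 2 - R ^ 2 * r ^ 2 / 2 - R ^ 4 / (2 * s))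
        ((4:ℕ) * r ^ 3 / 2 - R ^ 2 * ((2:ℕ) * r ^ 1) / 2) r := by
      exact (((hasDerivAt_pow 4 r).div_const 2).sub
        (((hasDerivAt_pow 2 r).const_mul (R^2)).div_const 2)).sub_const _
    have h4 := (h3.mul h2).const_mul K
    convert h4 using 1
    · rfl
    · rfl
    · rfl
    have hsR : s = a * R ^ 2 := haR.symm
    rw [hsR]
    push_cast
    field_simp
    ring
  have hcont : IntervalIntegrable
      (fun r => r ^ 3 * (K * (2 + s * (1 - r ^ 2 / R ^ 2)) * Real.exp (-a * r ^ 2)))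
      volume 0 R := by
    apply Continuous.intervalIntegrable
    continuity
  have hftc := intervalIntegral.integral_eq_sub_of_hasDerivAt hderiv hcont
  have hIoo : (∫ y in Set.Ioo (0:ℝ) R, y ^ 3 *
        (K * (2 + s * (1 - y ^ 2 / R ^ 2)) * Real.exp (-a * y ^ 2)))
      = ∫ y in (0:ℝ)..R, y ^ 3 * (K * (2 + s * (1 - y ^ 2 / R ^ 2)) * Real.exp (-a * y ^ 2)) := by
    rw [intervalIntegral.integral_of_le hR.le, MeasureTheory.integral_Ioc_eq_integral_Ioo]
  rw [hIoo, hftc, hHdef]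
  simp only
  have hexp : -a * R ^ 2 = -s := by rw [neg_mul, haR]
  rw [hexp]
  have h0 : Real.exp (-a * 0 ^ 2) = 1 := by norm_num
  rw [h0, hKdef]
  have hpi : π ≠ 0 := pi_ne_zero
  field_simp
  ring

theorem fourD_flight_ac_mass (lam c t : ℝ) (hlam : 0 < lam) (hc : 0 < c) (ht : 0 < t) :
    (∫ x in Metric.ball (0 : EuclideanSpace ℝ (Fin 4)) (c * t),
        (lam * t / (π ^ 2 * (c * t) ^ 4)) *
          (2 + lam * t * (1 - ‖x‖ ^ 2 / (c * t) ^ 2)) *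
            Real.exp (-(lam / (c ^ 2 * t)) * ‖x‖ ^ 2)) = 1 - Real.exp (-(lam * t)) := by
  have hpolar := polar4 (c * t) (fun r => (lam * t / (π ^ 2 * (c * t) ^ 4)) *
    (2 + lam * t * (1 - r ^ 2 / (c * t) ^ 2)) * Real.exp (-(lam / (c ^ 2 * t)) * r ^ 2))
  have h1d := oneD lam c t hlam hc ht
  have hpi : π ≠ 0 := pi_ne_zero
  calc (∫ x in Metric.ball (0 : EuclideanSpace ℝ (Fin 4)) (c * t),
        (lam * t / (π ^ 2 * (c * t) ^ 4)) *
          (2 + lam * t * (1 - ‖x‖ ^ 2 / (c * t) ^ 2)) *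
            Real.exp (-(lam / (c ^ 2 * t)) * ‖x‖ ^ 2))
      = 2 * π ^ 2 * ∫ y in Set.Ioo (0:ℝ) (c*t), y ^ 3 *
          ((lam * t / (π ^ 2 * (c * t) ^ 4)) *
            (2 + lam * t * (1 - y ^ 2 / (c * t) ^ 2)) *
              Real.exp (-(lam / (c ^ 2 * t)) * y ^ 2)) := hpolar
    _ = 2 * π ^ 2 * ((1 - Real.exp (-(lam * t))) / (2 * π ^ 2)) := by rw [h1d]
    _ = 1 - Real.exp (-(lam * t)) := by field_simp
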